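/- Define the matrices ρ(a) = [[e₁, 2e₁⁻¹],[0, e₁⁻¹]] and ρ(b) = (1/(√t₁ (e₁²-1))) · [[(e₁²+1)t₁ + 2, -2(t₁+1)],[-e₁²+1, e₁²-1]] for e₁ ∈ ℂ \ {0, ±1, ±√-1} and t₁ ∈ ℂ*. Then the commutator ρ(a)ρ(b)ρ(a)⁻¹ρ(b)⁻¹ has trace -2, i.e. is parabolic (as a PSL(2,ℂ) element). -/

import Mathlib

open Matrix

set_option maxHeartbeats 1000000 in
theorem commutator_trace_eq_neg_two
    (e₁ t₁ s : ℂ)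
    (he0 : e₁ ≠ 0) (he1 : e₁ ≠ 1) (hem1 : e₁ ≠ -1)
    (hei : e₁ ≠ Complex.I) (hemi : e₁ ≠ -Complex.I)
    (ht : t₁ ≠ 0) (hs : s ^ 2 = t₁)
    (A B : Matrix (Fin 2) (Fin 2) ℂ)
    (hA : A = !![e₁, 2 * e₁⁻¹; 0, e₁⁻¹])
    (hB : B = (1 / (s * (e₁ ^ 2 - 1))) •
        !![(e₁ ^ 2 + 1) * t₁ + 2, -2 * (t₁ + 1); -e₁ ^ 2 + 1, e₁ ^ 2 - 1]) :
    Matrix.trace (A * B * A⁻¹ * B⁻¹) = -2 := by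
  subst hs
  have hs0 : s ≠ 0 := by
    intro h; apply ht; rw [h]; ring
  have hsq : e₁ ^ 2 - 1 ≠ 0 := by
    intro h
    have : (e₁ - 1) * (e₁ + 1) = 0 := by linear_combination h
    rcases mul_eq_zero.mp this with h' | h'
    · exact he1 (by linear_combination h')
    · exact hem1 (by linear_combination h')
  have hAinv : A⁻¹ = !![e₁⁻¹, -2 * e₁⁻¹; 0, e₁] := by
    apply inv_eq_right_inv
    rw [hA]
    ext i j
    fin_cases i <;> fin_cases j <;>
      simp [Matrix.mul_apply, Fin.sum_univ_two, Matrix.one_apply] <;>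
      field_simp <;> ring
  have hBinv : B⁻¹ = (1 / (s * (e₁ ^ 2 - 1))) •
      !![e₁ ^ 2 - 1, 2 * (s ^ 2 + 1); e₁ ^ 2 - 1, (e₁ ^ 2 + 1) * s ^ 2 + 2] := by
    apply inv_eq_right_inv
    rw [hB]
    ext i j
    fin_cases i <;> fin_cases j <;>
      simp [Matrix.mul_apply, Fin.sum_univ_two, Matrix.one_apply] <;>
      field_simp <;> ring
  rw [hAinv, hBinv, hA, hB]
  simp only [Matrix.mul_smul, Matrix.smul_mul, smul_smul]
  rw [Matrix.trace_smul, Matrix.mul_fin_two, Matrix.mul_fin_two, Matrix.mul_fin_two,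
    Matrix.trace_fin_two_of, smul_eq_mul]
  field_simp
  ring
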